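/- The function x ↦ (sin(πα)/(πα)) · 1/(1 + 2·cos(πα)·x + x²) on (0,∞) is a probability density function for every α ∈ (0,1), i.e., it is nonnegative and integrates to 1 over (0,∞). -/

import Mathlib

open Real Set Filter

theorem aux_integral (θ : ℝ) (h0 : 0 < θ) (h1 : θ < π) :
    ∫ x in Ioi (0:ℝ), 1 / (1 + 2 * Real.cos θ * x + x ^ 2) = θ / Real.sin θ := by
  have hs : 0 < Real.sin θ := Real.sin_pos_of_pos_of_lt_pi h0 h1
  have hs' : Real.sin θ ≠ 0 := ne_of_gt hs
  set c := Real.cos θ with hc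
  set s := Real.sin θ with hsdef
  have hsq : ∀ x : ℝ, 1 + 2 * c * x + x ^ 2 = (x + c) ^ 2 + s ^ 2 := by
    intro x
    have := Real.sin_sq_add_cos_sq θ
    nlinarith [this]
  have hpos : ∀ x : ℝ, 0 < 1 + 2 * c * x + x ^ 2 := by
    intro x; rw [hsq x]; positivity
  have hderiv : ∀ x ∈ Ioi (0:ℝ),
      HasDerivAt (fun x => Real.arctan ((x + c) / s) / s)
        (1 / (1 + 2 * c * x + x ^ 2)) x := by
    intro x _
    have h1 : HasDerivAt (fun x : ℝ => (x + c) / s) (1 / s) x := by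
      simpa using ((hasDerivAt_id x).add_const c).div_const s
    have h2 := (Real.hasDerivAt_arctan ((x + c) / s)).comp x h1
    have h3 := h2.div_const s
    convert h3 using 1
    · rfl
    · rfl
    · rfl
    rw [hsq x]
    field_simp
    ring
  have hcont : ContinuousWithinAt (fun x => Real.arctan ((x + c) / s) / s) (Ici 0) 0 :=
    ((Real.continuous_arctan.comp (by continuity)).div_const s).continuousWithinAt
  have hnn : ∀ x ∈ Ioi (0:ℝ), 0 ≤ 1 / (1 + 2 * c * x + x ^ 2) := by
    intro x _; exact le_of_lt (by have := hpos x; positivity)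
  have htend : Tendsto (fun x => Real.arctan ((x + c) / s) / s) atTop (nhds (π / 2 / s)) := by
    apply Tendsto.div_const
    apply (Real.tendsto_arctan_atTop.mono_right nhdsWithin_le_nhds).comp
    apply Tendsto.atTop_div_const hs
    exact tendsto_atTop_add_const_right _ _ tendsto_id
  have key := MeasureTheory.integral_Ioi_of_hasDerivAt_of_nonneg hcont hderiv hnn htend
  rw [key]
  have harct : Real.arctan ((0 + c) / s) = π / 2 - θ := by
    rw [zero_add]
    have : c / s = Real.tan (π / 2 - θ) := by
      rw [Real.tan_eq_sin_div_cos, Real.sin_pi_div_two_sub, Real.cos_pi_div_two_sub]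
    rw [this, Real.arctan_tan (by linarith) (by linarith)]
  rw [harct]
  field_simp
  ring

theorem generalized_cauchy_is_pdf (α : ℝ) (hα : α ∈ Ioo (0:ℝ) 1) :
    (∀ x ∈ Ioi (0:ℝ),
        0 ≤ Real.sin (π * α) / (π * α) * (1 / (1 + 2 * Real.cos (π * α) * x + x ^ 2))) ∧
    ∫ x in Ioi (0:ℝ),
        Real.sin (π * α) / (π * α) * (1 / (1 + 2 * Real.cos (π * α) * x + x ^ 2)) = 1 := by
  obtain ⟨h0, h1⟩ := hα
  have hθ0 : 0 < π * α := by positivity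
  have hθ1 : π * α < π := by nlinarith [Real.pi_pos]
  have hs : 0 < Real.sin (π * α) := Real.sin_pos_of_pos_of_lt_pi hθ0 hθ1
  have hpos : ∀ x : ℝ, 0 < 1 + 2 * Real.cos (π * α) * x + x ^ 2 := by
    intro x
    have := Real.sin_sq_add_cos_sq (π * α)
    nlinarith [this, sq_nonneg (x + Real.cos (π * α)), hs]
  constructor
  · intro x _
    have := hpos x
    positivity
  · rw [MeasureTheory.integral_const_mul, aux_integral (π * α) hθ0 hθ1]
    field_simp
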